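/- The function f₁(r) = r'² K(r) / E(r) is strictly decreasing on (0,1), and it maps (0,1) onto (0,1). -/

import Mathlib

open Real Set Filter

/-- Complete elliptic integral of the first kind. -/
noncomputable def K (r : ℝ) : ℝ :=
  ∫ θ in (0:ℝ)..(π/2), 1 / Real.sqrt (1 - r^2 * Real.sin θ ^ 2)

/-- Complete elliptic integral of the second kind. -/
noncomputable def E (r : ℝ) : ℝ :=
  ∫ θ in (0:ℝ)..(π/2), Real.sqrt (1 - r^2 * Real.sin θ ^ 2)

/-- Complementary complete elliptic integral of the first kind: `K'(r) = K(√(1-r²))`. -/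
noncomputable def K' (r : ℝ) : ℝ := K (Real.sqrt (1 - r^2))

/-- Complementary complete elliptic integral of the second kind: `E'(r) = E(√(1-r²))`. -/
noncomputable def E' (r : ℝ) : ℝ := E (Real.sqrt (1 - r^2))

/-- The special function `m(r) = (2/π) r'² K(r) K'(r)` (here `r'² = 1 - r²`). -/
noncomputable def m (r : ℝ) : ℝ := (2/π) * (1 - r^2) * K r * K' r

open MeasureTheory intervalIntegral

namespace EllAux

noncomputable def J (r : ℝ) : ℝ :=
  ∫ θ in (0:ℝ)..(π/2), Real.sin θ ^ 2 / Real.sqrt (1 - r^2 * Real.sin θ ^ 2)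

noncomputable def L (r : ℝ) : ℝ :=
  ∫ θ in (0:ℝ)..(π/2), Real.sin θ ^ 2 /
    ((1 - r^2 * Real.sin θ ^ 2) * Real.sqrt (1 - r^2 * Real.sin θ ^ 2))

lemma q_pos {r : ℝ} (hr : r^2 < 1) (θ : ℝ) : 0 < 1 - r^2 * Real.sin θ ^ 2 := by
  nlinarith [Real.sin_sq_le_one θ, sq_nonneg r, sq_nonneg (Real.sin θ)]

lemma sqrt_q_pos {r : ℝ} (hr : r^2 < 1) (θ : ℝ) : 0 < Real.sqrt (1 - r^2 * Real.sin θ ^ 2) :=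
  Real.sqrt_pos.2 (q_pos hr θ)

lemma cont_sqrt_q (r : ℝ) : Continuous fun θ : ℝ => Real.sqrt (1 - r^2 * Real.sin θ ^ 2) := by
  fun_prop

lemma cont_invsqrt {r : ℝ} (hr : r^2 < 1) :
    Continuous fun θ : ℝ => 1 / Real.sqrt (1 - r^2 * Real.sin θ ^ 2) :=
  continuous_const.div (cont_sqrt_q r) (fun θ => (sqrt_q_pos hr θ).ne')

lemma cont_J_int {r : ℝ} (hr : r^2 < 1) :
    Continuous fun θ : ℝ => Real.sin θ ^ 2 / Real.sqrt (1 - r^2 * Real.sin θ ^ 2) :=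
  Continuous.div (by fun_prop) (cont_sqrt_q r) (fun θ => (sqrt_q_pos hr θ).ne')

lemma cont_L_int {r : ℝ} (hr : r^2 < 1) :
    Continuous fun θ : ℝ => Real.sin θ ^ 2 /
      ((1 - r^2 * Real.sin θ ^ 2) * Real.sqrt (1 - r^2 * Real.sin θ ^ 2)) :=
  Continuous.div (by fun_prop) ((by fun_prop : Continuous fun θ : ℝ => (1 - r^2*Real.sin θ ^ 2)).mul
    (cont_sqrt_q r)) (fun θ => (mul_pos (q_pos hr θ) (sqrt_q_pos hr θ)).ne')

/-! ### Derivatives of the integrands -/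

lemma hasDerivAt_K_int (θ : ℝ) {x : ℝ} (hx : x^2 < 1) :
    HasDerivAt (fun r : ℝ => 1 / Real.sqrt (1 - r^2 * Real.sin θ ^ 2))
      (x * Real.sin θ ^ 2 /
        ((1 - x^2 * Real.sin θ ^ 2) * Real.sqrt (1 - x^2 * Real.sin θ ^ 2))) x := by
  have hq := q_pos hx θ
  have hs := sqrt_q_pos hx θ
  have h1 : HasDerivAt (fun r : ℝ => 1 - r^2 * Real.sin θ ^ 2) (-(2*x*Real.sin θ ^ 2)) x := by
    simpa using ((hasDerivAt_pow 2 x).mul_const (Real.sin θ ^ 2)).const_sub 1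
  have h2 := (h1.sqrt hq.ne').inv hs.ne'
  have heq : -(-(2*x*Real.sin θ ^ 2) / (2 * Real.sqrt (1 - x^2 * Real.sin θ ^ 2))) /
      (Real.sqrt (1 - x^2 * Real.sin θ ^ 2))^2
      = x * Real.sin θ ^ 2 /
        ((1 - x^2 * Real.sin θ ^ 2) * Real.sqrt (1 - x^2 * Real.sin θ ^ 2)) := by
    rw [Real.sq_sqrt hq.le]; field_simp
  rw [heq] at h2
  simp [one_div] at h2 ⊢; exact h2

lemma hasDerivAt_E_int (θ : ℝ) {x : ℝ} (hx : x^2 < 1) :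
    HasDerivAt (fun r : ℝ => Real.sqrt (1 - r^2 * Real.sin θ ^ 2))
      (-(x * Real.sin θ ^ 2 / Real.sqrt (1 - x^2 * Real.sin θ ^ 2))) x := by
  have hq := q_pos hx θ
  have h1 : HasDerivAt (fun r : ℝ => 1 - r^2 * Real.sin θ ^ 2) (-(2*x*Real.sin θ ^ 2)) x := by
    simpa using ((hasDerivAt_pow 2 x).mul_const (Real.sin θ ^ 2)).const_sub 1
  have h2 := h1.sqrt hq.ne'
  convert h2 using 1
  field_simp

/-! ### Derivatives of `K` and `E` -/

lemma hasDerivAt_K {r : ℝ} (h0 : 0 < r) (h1 : r < 1) :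
    HasDerivAt K (∫ θ in (0:ℝ)..(π/2),
      r * Real.sin θ ^ 2 /
        ((1 - r^2 * Real.sin θ ^ 2) * Real.sqrt (1 - r^2 * Real.sin θ ^ 2))) r := by
  have hr : r^2 < 1 := by nlinarith
  set c : ℝ := (1+r)/2 with hc
  have hc1 : c < 1 := by rw [hc]; linarith
  have hc0 : 0 < c := by rw [hc]; linarith
  have hcsq : c^2 < 1 := by nlinarith
  have hqc : (0:ℝ) < 1 - c^2 := by linarith
  have hε : (0:ℝ) < (1-r)/2 := by linarith
  have hball : ∀ x ∈ Metric.ball r ((1-r)/2), |x| < c ∧ x^2 < 1 := by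
    intro x hx
    rw [Metric.mem_ball, Real.dist_eq] at hx
    have h : |x| < c := by rw [abs_lt] at hx ⊢; constructor <;> [nlinarith; nlinarith]
    exact ⟨h, by nlinarith [abs_nonneg x, sq_abs x]⟩
  have key := intervalIntegral.hasDerivAt_integral_of_dominated_loc_of_deriv_le
    (𝕜 := ℝ) (μ := volume) (a := (0:ℝ)) (b := π/2)
    (F := fun x θ => 1 / Real.sqrt (1 - x^2 * Real.sin θ ^ 2))
    (F' := fun x θ => x * Real.sin θ ^ 2 /
        ((1 - x^2 * Real.sin θ ^ 2) * Real.sqrt (1 - x^2 * Real.sin θ ^ 2)))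
    (x₀ := r) (bound := fun _ => c / ((1 - c^2) * Real.sqrt (1 - c^2))) (Metric.ball_mem_nhds r hε)
    (Eventually.of_forall fun x => by
      apply Measurable.aestronglyMeasurable
      apply Measurable.div measurable_const
      fun_prop)
    ((cont_invsqrt hr).intervalIntegrable _ _)
    (Continuous.aestronglyMeasurable (by
      apply Continuous.div (by fun_prop)
      · fun_prop
      · exact fun θ => (mul_pos (q_pos hr θ) (sqrt_q_pos hr θ)).ne'))
    (Eventually.of_forall fun θ _ x hx => by
      obtain ⟨hxc, hx1⟩ := hball x hx
      have hq := q_pos hx1 θ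
      have hs := sqrt_q_pos hx1 θ
      have hqq : 1 - c^2 ≤ 1 - x^2 * Real.sin θ ^ 2 := by
        nlinarith [Real.sin_sq_le_one θ, sq_abs x, abs_nonneg x, sq_nonneg (Real.sin θ)]
      have hss : Real.sqrt (1 - c^2) ≤ Real.sqrt (1 - x^2 * Real.sin θ ^ 2) :=
        Real.sqrt_le_sqrt hqq
      simp only [Real.norm_eq_abs]
      rw [abs_div, abs_of_pos (mul_pos hq hs)]
      apply div_le_div₀ hc0.le _ (mul_pos hqc (Real.sqrt_pos.2 hqc))
        (mul_le_mul hqq hss (Real.sqrt_nonneg _) hq.le)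
      calc |x * Real.sin θ ^ 2| = |x| * Real.sin θ ^ 2 := by
            rw [abs_mul, abs_of_nonneg (sq_nonneg (Real.sin θ))]
        _ ≤ c * 1 := mul_le_mul hxc.le (Real.sin_sq_le_one θ) (sq_nonneg _) hc0.le
        _ = c := mul_one c)
    intervalIntegrable_const
    (Eventually.of_forall fun θ _ x hx => hasDerivAt_K_int θ (hball x hx).2)
  exact key.2

lemma hasDerivAt_K' {r : ℝ} (h0 : 0 < r) (h1 : r < 1) :
    HasDerivAt K (r * L r) r := by
  have h := hasDerivAt_K h0 h1
  have : (∫ θ in (0:ℝ)..(π/2),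
      r * Real.sin θ ^ 2 /
        ((1 - r^2 * Real.sin θ ^ 2) * Real.sqrt (1 - r^2 * Real.sin θ ^ 2))) = r * L r := by
    rw [L, ← intervalIntegral.integral_const_mul]
    congr 1 with θ
    ring
  rwa [this] at h

lemma hasDerivAt_E {r : ℝ} (h0 : 0 < r) (h1 : r < 1) :
    HasDerivAt E (∫ θ in (0:ℝ)..(π/2),
      -(r * Real.sin θ ^ 2 / Real.sqrt (1 - r^2 * Real.sin θ ^ 2))) r := by
  have hr : r^2 < 1 := by nlinarith
  set c : ℝ := (1+r)/2 with hc
  have hc1 : c < 1 := by rw [hc]; linarith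
  have hc0 : 0 < c := by rw [hc]; linarith
  have hcsq : c^2 < 1 := by nlinarith
  have hqc : (0:ℝ) < 1 - c^2 := by linarith
  have hε : (0:ℝ) < (1-r)/2 := by linarith
  have hball : ∀ x ∈ Metric.ball r ((1-r)/2), |x| < c ∧ x^2 < 1 := by
    intro x hx
    rw [Metric.mem_ball, Real.dist_eq] at hx
    have h : |x| < c := by rw [abs_lt] at hx ⊢; constructor <;> [nlinarith; nlinarith]
    exact ⟨h, by nlinarith [abs_nonneg x, sq_abs x]⟩
  have key := intervalIntegral.hasDerivAt_integral_of_dominated_loc_of_deriv_le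
    (𝕜 := ℝ) (μ := volume) (a := (0:ℝ)) (b := π/2)
    (F := fun x θ => Real.sqrt (1 - x^2 * Real.sin θ ^ 2))
    (F' := fun x θ => -(x * Real.sin θ ^ 2 / Real.sqrt (1 - x^2 * Real.sin θ ^ 2)))
    (x₀ := r) (bound := fun _ => c / Real.sqrt (1 - c^2)) (Metric.ball_mem_nhds r hε)
    (Eventually.of_forall fun x => (Continuous.aestronglyMeasurable (by fun_prop)))
    ((Continuous.intervalIntegrable (by fun_prop) _ _))
    (Continuous.aestronglyMeasurable (by
      apply Continuous.neg
      apply Continuous.div (by fun_prop) (by fun_prop)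
      exact fun θ => (sqrt_q_pos hr θ).ne'))
    (Eventually.of_forall fun θ _ x hx => by
      obtain ⟨hxc, hx1⟩ := hball x hx
      have hq := q_pos hx1 θ
      have hs := sqrt_q_pos hx1 θ
      have hqq : 1 - c^2 ≤ 1 - x^2 * Real.sin θ ^ 2 := by
        nlinarith [Real.sin_sq_le_one θ, sq_abs x, abs_nonneg x, sq_nonneg (Real.sin θ)]
      have hss : Real.sqrt (1 - c^2) ≤ Real.sqrt (1 - x^2 * Real.sin θ ^ 2) :=
        Real.sqrt_le_sqrt hqq
      simp only [Real.norm_eq_abs, abs_neg]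
      rw [abs_div, abs_of_pos hs]
      apply div_le_div₀ hc0.le _ (Real.sqrt_pos.2 hqc) hss
      calc |x * Real.sin θ ^ 2| = |x| * Real.sin θ ^ 2 := by
            rw [abs_mul, abs_of_nonneg (sq_nonneg (Real.sin θ))]
        _ ≤ c * 1 := mul_le_mul hxc.le (Real.sin_sq_le_one θ) (sq_nonneg _) hc0.le
        _ = c := mul_one c)
    intervalIntegrable_const
    (Eventually.of_forall fun θ _ x hx => hasDerivAt_E_int θ (hball x hx).2)
  exact key.2

lemma hasDerivAt_E' {r : ℝ} (h0 : 0 < r) (h1 : r < 1) :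
    HasDerivAt E (-(r * J r)) r := by
  have h := hasDerivAt_E h0 h1
  have : (∫ θ in (0:ℝ)..(π/2),
      -(r * Real.sin θ ^ 2 / Real.sqrt (1 - r^2 * Real.sin θ ^ 2))) = -(r * J r) := by
    rw [J, ← intervalIntegral.integral_const_mul, ← intervalIntegral.integral_neg]
    congr 1 with θ
    ring
  rwa [this] at h

/-! ### Integral identities -/

lemma KE_identity {r : ℝ} (hr : r^2 < 1) : K r - E r = r^2 * J r := by
  rw [K, E, J, ← intervalIntegral.integral_const_mul,
    ← intervalIntegral.integral_sub ((cont_invsqrt hr).intervalIntegrable _ _)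
      ((cont_sqrt_q r).intervalIntegrable _ _)]
  apply intervalIntegral.integral_congr
  intro θ _
  have hq := q_pos hr θ
  have hs := sqrt_q_pos hr θ
  have hsq : Real.sqrt (1 - r^2 * Real.sin θ ^ 2) ^ 2 = 1 - r^2 * Real.sin θ ^ 2 :=
    Real.sq_sqrt hq.le
  field_simp
  linarith [hsq]

lemma hasDerivAt_g {r : ℝ} (hr : r^2 < 1) (θ : ℝ) :
    HasDerivAt (fun θ : ℝ => Real.sin θ * Real.cos θ / Real.sqrt (1 - r^2 * Real.sin θ ^ 2))
      ((1 - Real.sin θ ^ 2) / Real.sqrt (1 - r^2 * Real.sin θ ^ 2)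
        - (1 - r^2) * (Real.sin θ ^ 2 /
            ((1 - r^2 * Real.sin θ ^ 2) * Real.sqrt (1 - r^2 * Real.sin θ ^ 2)))) θ := by
  have hq := q_pos hr θ
  have hw : 0 < Real.sqrt (1 - r^2 * Real.sin θ ^ 2) := Real.sqrt_pos.2 hq
  have hqθ : HasDerivAt (fun θ : ℝ => 1 - r^2 * Real.sin θ ^ 2)
      (-(r^2 * (2 * Real.sin θ ^ 1 * Real.cos θ))) θ := by
    simpa using (((Real.hasDerivAt_sin θ).pow 2).const_mul (r^2)).const_sub 1
  have hinv := (hqθ.sqrt hq.ne').inv hw.ne'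
  have hsc : HasDerivAt (fun θ : ℝ => Real.sin θ * Real.cos θ)
      (Real.cos θ * Real.cos θ + Real.sin θ * (-Real.sin θ)) θ :=
    (Real.hasDerivAt_sin θ).mul (Real.hasDerivAt_cos θ)
  have h := hsc.mul hinv
  have h2 : HasDerivAt
      (fun θ : ℝ => Real.sin θ * Real.cos θ / Real.sqrt (1 - r^2 * Real.sin θ ^ 2))
      ((Real.cos θ * Real.cos θ + Real.sin θ * (-Real.sin θ)) *
          (Real.sqrt (1 - r^2 * Real.sin θ ^ 2))⁻¹
        + Real.sin θ * Real.cos θ *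
          (-(-(r^2 * (2 * Real.sin θ ^ 1 * Real.cos θ)) /
              (2 * Real.sqrt (1 - r^2 * Real.sin θ ^ 2)) /
            Real.sqrt (1 - r^2 * Real.sin θ ^ 2) ^ 2))) θ := by
    simp [div_eq_mul_inv] at h ⊢; exact h
  convert h2 using 1
  have hpy := Real.sin_sq_add_cos_sq θ
  have hsq : Real.sqrt (1 - r^2 * Real.sin θ ^ 2) ^ 2 = 1 - r^2 * Real.sin θ ^ 2 :=
    Real.sq_sqrt hq.le
  rw [hsq]
  field_simp
  congr 1
  have hq' : 1 - Real.sin θ^2 * r^2 ≠ 0 := by nlinarith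
  field_simp
  linear_combination (-1) * hpy

lemma L_identity {r : ℝ} (hr : r^2 < 1) : (1 - r^2) * L r = K r - J r := by
  have hc1 : Continuous fun θ : ℝ =>
      (1 - Real.sin θ ^ 2) / Real.sqrt (1 - r^2 * Real.sin θ ^ 2) :=
    Continuous.div (by fun_prop) (cont_sqrt_q r) (fun θ => (sqrt_q_pos hr θ).ne')
  have hcont : Continuous fun θ : ℝ =>
      (1 - Real.sin θ ^ 2) / Real.sqrt (1 - r^2 * Real.sin θ ^ 2)
        - (1 - r^2) * (Real.sin θ ^ 2 /
            ((1 - r^2 * Real.sin θ ^ 2) * Real.sqrt (1 - r^2 * Real.sin θ ^ 2))) := by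
    apply Continuous.sub
    · exact Continuous.div (by fun_prop) (cont_sqrt_q r) (fun θ => (sqrt_q_pos hr θ).ne')
    · exact continuous_const.mul (cont_L_int hr)
  have hftc := intervalIntegral.integral_eq_sub_of_hasDerivAt
    (a := (0:ℝ)) (b := π/2)
    (f := fun θ : ℝ => Real.sin θ * Real.cos θ / Real.sqrt (1 - r^2 * Real.sin θ ^ 2))
    (fun θ _ => hasDerivAt_g hr θ) (hcont.intervalIntegrable _ _)
  have hz : (∫ θ in (0:ℝ)..(π/2),
      ((1 - Real.sin θ ^ 2) / Real.sqrt (1 - r^2 * Real.sin θ ^ 2)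
        - (1 - r^2) * (Real.sin θ ^ 2 /
            ((1 - r^2 * Real.sin θ ^ 2) * Real.sqrt (1 - r^2 * Real.sin θ ^ 2))))) = 0 := by
    rw [hftc]; simp
  have hsplit : (∫ θ in (0:ℝ)..(π/2),
      ((1 - Real.sin θ ^ 2) / Real.sqrt (1 - r^2 * Real.sin θ ^ 2)
        - (1 - r^2) * (Real.sin θ ^ 2 /
            ((1 - r^2 * Real.sin θ ^ 2) * Real.sqrt (1 - r^2 * Real.sin θ ^ 2)))))
      = (K r - J r) - (1 - r^2) * L r := by
    rw [intervalIntegral.integral_sub (hc1.intervalIntegrable _ _)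
      (((cont_L_int hr).const_mul (1 - r^2)).intervalIntegrable _ _),
      intervalIntegral.integral_const_mul]
    rw [L, K, J]
    congr 1
    rw [← intervalIntegral.integral_sub ((cont_invsqrt hr).intervalIntegrable _ _)
      ((cont_J_int hr).intervalIntegrable _ _)]
    apply intervalIntegral.integral_congr
    intro θ _
    simp only [sub_div]
  rw [hsplit] at hz
  linarith

/-! ### Inequalities -/

lemma E_ge_one {r : ℝ} (hr : r^2 < 1) : 1 ≤ E r := by
  have h1 : (∫ θ in (0:ℝ)..(π/2), Real.cos θ) = 1 := by simp
  rw [← h1, E]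
  apply intervalIntegral.integral_mono_on (by positivity)
    (Real.continuous_cos.intervalIntegrable _ _) ((cont_sqrt_q r).intervalIntegrable _ _)
  intro θ hθ
  have hcos : 0 ≤ Real.cos θ := Real.cos_nonneg_of_mem_Icc
    ⟨by linarith [hθ.1, Real.pi_pos], hθ.2⟩
  calc Real.cos θ = Real.sqrt (Real.cos θ ^ 2) := (Real.sqrt_sq hcos).symm
    _ = Real.sqrt (1 - Real.sin θ ^ 2) := by rw [Real.cos_sq']
    _ ≤ Real.sqrt (1 - r^2 * Real.sin θ ^ 2) := by
        apply Real.sqrt_le_sqrt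
        nlinarith [sq_nonneg (Real.sin θ)]

lemma E_lt_K {r : ℝ} (h0 : 0 < r) (h1 : r < 1) : E r < K r := by
  have hr : r^2 < 1 := by nlinarith
  have hpos : 0 < ∫ θ in (0:ℝ)..(π/2),
      (1 / Real.sqrt (1 - r^2 * Real.sin θ ^ 2) - Real.sqrt (1 - r^2 * Real.sin θ ^ 2)) := by
    apply intervalIntegral_pos_of_pos_on
      (((cont_invsqrt hr).sub (cont_sqrt_q r)).intervalIntegrable _ _)
    · intro θ hθ
      have hsin : 0 < Real.sin θ := Real.sin_pos_of_pos_of_lt_pi hθ.1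
        (by linarith [hθ.2, Real.pi_pos])
      have hq := q_pos hr θ
      have hs := sqrt_q_pos hr θ
      have hqlt : 1 - r^2 * Real.sin θ ^ 2 < 1 := by
        nlinarith [mul_pos (pow_pos h0 2) (pow_pos hsin 2)]
      have h2 : Real.sqrt (1 - r^2 * Real.sin θ ^ 2) < 1 := by
        have := Real.sqrt_lt_sqrt hq.le hqlt
        simpa using this
      have h3 : 1 < 1 / Real.sqrt (1 - r^2 * Real.sin θ ^ 2) := (one_lt_div hs).2 h2
      simp only [Pi.sub_apply]
      linarith
    · positivity
  rw [intervalIntegral.integral_sub ((cont_invsqrt hr).intervalIntegrable _ _)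
    ((cont_sqrt_q r).intervalIntegrable _ _)] at hpos
  rw [K, E]
  linarith

lemma A_lt_E {r : ℝ} (h0 : 0 < r) (h1 : r < 1) : (1 - r^2) * K r < E r := by
  have hr : r^2 < 1 := by nlinarith
  have hA : (1 - r^2) * K r = ∫ θ in (0:ℝ)..(π/2),
      (1 - r^2) * (1 / Real.sqrt (1 - r^2 * Real.sin θ ^ 2)) := by
    rw [K, intervalIntegral.integral_const_mul]
  have hpos : 0 < ∫ θ in (0:ℝ)..(π/2),
      (Real.sqrt (1 - r^2 * Real.sin θ ^ 2)
        - (1 - r^2) * (1 / Real.sqrt (1 - r^2 * Real.sin θ ^ 2))) := by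
    apply intervalIntegral_pos_of_pos_on
      (((cont_sqrt_q r).sub (continuous_const.mul (cont_invsqrt hr))).intervalIntegrable _ _)
    · intro θ hθ
      have hcos : 0 < Real.cos θ := Real.cos_pos_of_mem_Ioo
        ⟨by linarith [hθ.1, Real.pi_pos], hθ.2⟩
      have hq := q_pos hr θ
      have hs := sqrt_q_pos hr θ
      have hsq : Real.sqrt (1 - r^2 * Real.sin θ ^ 2) ^ 2 = 1 - r^2 * Real.sin θ ^ 2 :=
        Real.sq_sqrt hq.le
      have hkey : 1 - r^2 < 1 - r^2 * Real.sin θ ^ 2 := by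
        have hpy := Real.sin_sq_add_cos_sq θ
        nlinarith [mul_pos (pow_pos h0 2) (pow_pos hcos 2)]
      simp only [Pi.sub_apply, Pi.mul_apply]
      rw [sub_pos, mul_one_div, div_lt_iff₀ hs]
      nlinarith
    · positivity
  rw [intervalIntegral.integral_sub ((cont_sqrt_q r).intervalIntegrable _ _)
    (((cont_invsqrt hr).const_mul (1 - r^2)).intervalIntegrable _ _),
    intervalIntegral.integral_const_mul] at hpos
  rw [K, E]
  nlinarith [hpos]

lemma K_le {r : ℝ} (hr : r^2 < 1) : K r ≤ π/2 * (1 / Real.sqrt (1 - r^2)) := by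
  have h1 : (0:ℝ) < 1 - r^2 := by linarith
  have hs1 : 0 < Real.sqrt (1 - r^2) := Real.sqrt_pos.2 h1
  have hconst : (∫ _ in (0:ℝ)..(π/2), (1 / Real.sqrt (1 - r^2)))
      = π/2 * (1 / Real.sqrt (1 - r^2)) := by
    rw [intervalIntegral.integral_const]; simp
  rw [← hconst, K]
  apply intervalIntegral.integral_mono_on (by positivity)
    ((cont_invsqrt hr).intervalIntegrable _ _) (intervalIntegrable_const)
  intro θ _
  apply one_div_le_one_div_of_le hs1
  apply Real.sqrt_le_sqrt
  nlinarith [mul_le_mul_of_nonneg_left (Real.sin_sq_le_one θ) (sq_nonneg r)]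

lemma E_pos {r : ℝ} (hr : r^2 < 1) : 0 < E r := lt_of_lt_of_le one_pos (E_ge_one hr)

lemma K_pos {r : ℝ} (h0 : 0 < r) (h1 : r < 1) : 0 < K r :=
  lt_trans (E_pos (by nlinarith)) (E_lt_K h0 h1)

/-! ### The derivative of `f` -/

lemma hasDerivAt_f {r : ℝ} (h0 : 0 < r) (h1 : r < 1) :
    ∃ d : ℝ, d < 0 ∧ HasDerivAt (fun r : ℝ => (1 - r^2) * K r / E r) d r := by
  have hr : r^2 < 1 := by nlinarith
  have he : 0 < E r := E_pos hr
  have hek : E r < K r := E_lt_K h0 h1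
  have hae : (1 - r^2) * K r < E r := A_lt_E h0 h1
  have hk : 0 < K r := K_pos h0 h1
  have hc : HasDerivAt (fun r : ℝ => 1 - r^2) (-(2*r)) r := by
    simpa using (hasDerivAt_pow 2 r).const_sub 1
  have hA : HasDerivAt (fun r : ℝ => (1 - r^2) * K r)
      (-(2*r) * K r + (1 - r^2) * (r * L r)) r := hc.mul (hasDerivAt_K' h0 h1)
  have hdiv := hA.div (hasDerivAt_E' h0 h1) he.ne'
  refine ⟨_, ?_, hdiv⟩
  have hKE := KE_identity hr
  have hL := L_identity hr
  have hne1 : (1:ℝ) - r^2 ≠ 0 := by nlinarith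
  have hj : J r = (K r - E r)/r^2 := by field_simp; linarith [hKE]
  have hl : L r = (K r - J r)/(1 - r^2) := by field_simp; linarith [hL]
  have hnum : (-(2*r) * K r + (1 - r^2) * (r * L r)) * E r - (1 - r^2) * K r * -(r * J r)
      = (E r^2 - 2 * K r * E r + (1 - r^2) * K r^2)/r := by
    rw [hl, hj]
    field_simp
    ring
  rw [hnum]
  apply div_neg_of_neg_of_pos _ (by positivity : (0:ℝ) < E r ^ 2)
  apply div_neg_of_neg_of_pos _ h0
  nlinarith [mul_lt_mul_of_pos_left hek he, mul_lt_mul_of_pos_right hae hk]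



lemma f_ge {r : ℝ} (h0 : 0 < r) (h1 : r < 1) : 1 - r^2 ≤ (1 - r^2) * K r / E r := by
  have hr : r^2 < 1 := by nlinarith
  have he := E_pos hr
  rw [le_div_iff₀ he]
  nlinarith [(E_lt_K h0 h1).le]

lemma f_le {r : ℝ} (h0 : 0 < r) (h1 : r < 1) :
    (1 - r^2) * K r / E r ≤ π/2 * Real.sqrt (1 - r^2) := by
  have hr : r^2 < 1 := by nlinarith
  have he1 := E_ge_one hr
  have hk := K_pos h0 h1
  have hA : 0 ≤ (1 - r^2) * K r := by nlinarith
  calc (1 - r^2) * K r / E r ≤ (1 - r^2) * K r := div_le_self hA he1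
    _ ≤ (1 - r^2) * (π/2 * (1 / Real.sqrt (1 - r^2))) :=
        mul_le_mul_of_nonneg_left (K_le hr) (by nlinarith)
    _ = π/2 * ((1 - r^2) / Real.sqrt (1 - r^2)) := by ring
    _ = π/2 * Real.sqrt (1 - r^2) := by rw [Real.div_sqrt]

end EllAux

open EllAux

theorem stmt_8 :
    StrictAntiOn (fun r : ℝ => (1 - r^2) * K r / E r) (Set.Ioo (0:ℝ) 1) ∧
    (fun r : ℝ => (1 - r^2) * K r / E r) '' Set.Ioo (0:ℝ) 1 = Set.Ioo (0:ℝ) 1 := by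
  set f : ℝ → ℝ := fun r => (1 - r^2) * K r / E r with hfdef
  have hder : ∀ x ∈ Ioo (0:ℝ) 1, ∃ d : ℝ, d < 0 ∧ HasDerivAt f d x :=
    fun x hx => hasDerivAt_f hx.1 hx.2
  have hcont : ContinuousOn f (Ioo 0 1) := fun x hx => by
    obtain ⟨d, _, hd⟩ := hder x hx
    exact hd.continuousAt.continuousWithinAt
  have hanti : StrictAntiOn f (Ioo 0 1) := by
    apply strictAntiOn_of_deriv_neg (convex_Ioo 0 1) hcont
    intro x hx
    rw [interior_Ioo] at hx
    obtain ⟨d, hdneg, hd⟩ := hder x hx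
    rw [hd.deriv]
    exact hdneg
  refine ⟨hanti, ?_⟩
  apply Subset.antisymm
  · rintro _ ⟨r, hr, rfl⟩
    have hr2 : r^2 < 1 := by nlinarith [hr.1, hr.2]
    have hk := K_pos hr.1 hr.2
    have he := E_pos hr2
    refine ⟨div_pos (by nlinarith) he, ?_⟩
    exact (div_lt_one he).2 (A_lt_E hr.1 hr.2)
  · rintro y ⟨hy0, hy1⟩
    have hπ := Real.pi_pos
    set a := Real.sqrt ((1-y)/2) with ha
    have ha2 : a^2 = (1-y)/2 := Real.sq_sqrt (by linarith)
    have ha0 : 0 < a := Real.sqrt_pos.2 (by linarith)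
    have ha1 : a < 1 := by nlinarith [ha2, sq_nonneg (a-1)]
    set δ := min ((y/π)^2) ((1 - a^2)/2) with hδ
    have hδ0 : 0 < δ := lt_min (by positivity) (by nlinarith)
    have hδ1 : δ ≤ (1 - a^2)/2 := min_le_right _ _
    have hδy : δ ≤ (y/π)^2 := min_le_left _ _
    have hδlt : δ < 1 := by nlinarith
    set b := Real.sqrt (1 - δ) with hb
    have hb2 : b^2 = 1 - δ := Real.sq_sqrt (by linarith)
    have hbnn : 0 ≤ b := Real.sqrt_nonneg _
    have hb1 : b < 1 := by nlinarith [sq_nonneg (b-1)]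
    have hab : a < b := by nlinarith
    have hb0 : 0 < b := ha0.trans hab
    have hfa : y < f a := by
      have := f_ge ha0 ha1
      have hy' : y < 1 - a^2 := by rw [ha2]; linarith
      exact lt_of_lt_of_le hy' this
    have hfb : f b < y := by
      have h1 := f_le hb0 hb1
      have h2 : Real.sqrt (1 - b^2) ≤ y/π := by
        rw [hb2, show (1:ℝ) - (1-δ) = δ by ring]
        have := Real.sqrt_le_sqrt hδy
        rwa [Real.sqrt_sq (by positivity : (0:ℝ) ≤ y/π)] at this
      have : f b ≤ π/2 * (y/π) := le_trans h1 (by nlinarith)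
      have heq : π/2 * (y/π) = y/2 := by field_simp
      rw [heq] at this
      linarith
    have hsub : Icc a b ⊆ Ioo (0:ℝ) 1 :=
      fun x hx => ⟨lt_of_lt_of_le ha0 hx.1, lt_of_le_of_lt hx.2 hb1⟩
    obtain ⟨x, hx, hxy⟩ := intermediate_value_Icc' hab.le (hcont.mono hsub) ⟨hfb.le, hfa.le⟩
    exact ⟨x, hsub hx, hxy⟩
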